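/- Let $m \geq 1$, let $f = y^m + h$ with $h \in \langle x,y\rangle^{m+1} \subseteq \mathbb{C}[[x,y]]$, and let $g = a \cdot \partial f/\partial x + b \cdot \partial f/\partial y + h'$ with $a, b \in \mathbb{C}[[x,y]]$ and $h' \in \langle x,y\rangle^m$. Then for every constant $c \in \mathbb{C}$, the deformation $f + \varepsilon g$ lies in $\langle x + \varepsilon(c + a), y + \varepsilon b \rangle^m$ in $\mathbb{C}[[x,y]][\varepsilon]/(\varepsilon^2)$, i.e., it is equimultiple along the section $(x,y) \mapsto (x + \varepsilon(c+a), y + \varepsilon b)$ for all $c \in \mathbb{C}$. -/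

import Mathlib

set_option synthInstance.maxHeartbeats 1000000
set_option maxHeartbeats 2000000

open MvPowerSeries TrivSqZeroExt DualNumber

noncomputable section

abbrev R2 := MvPowerSeries (Fin 2) ℂ

def Mxy : Ideal R2 := Ideal.span {MvPowerSeries.X 0, MvPowerSeries.X 1}

/-- Formal partial derivative of a power series in two variables. -/
def pd (i : Fin 2) (f : R2) : R2 :=
  fun d => (d i + 1 : ℂ) * MvPowerSeries.coeff (R := ℂ) (d + Finsupp.single i 1) f

/-- The element `x + ε a` of the dual numbers over `ℂ[[x,y]]`. -/
def Xa (a : R2) : DualNumber R2 := inl (MvPowerSeries.X 0) + eps * inl a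

/-- The element `y + ε b` of the dual numbers over `ℂ[[x,y]]`. -/
def Yb (b : R2) : DualNumber R2 := inl (MvPowerSeries.X 1) + eps * inl b

/-- The `n`-th term of the expansion of `f (x + ε a, y + ε b)`. -/
def termD (a b f : R2) (n : Fin 2 →₀ ℕ) : DualNumber R2 :=
  inl (MvPowerSeries.C (σ := Fin 2) (R := ℂ) (MvPowerSeries.coeff (R := ℂ) n f)) *
    (Xa a ^ (n 0) * Yb b ^ (n 1))

/-- Substitution `f (x + ε a, y + ε b)`, defined coefficientwise: each coefficient of
each component only receives contributions from finitely many terms of the expansion. -/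
def substDual (a b f : R2) : DualNumber R2 :=
  TrivSqZeroExt.inl (R := R2) (M := R2) ((fun d => MvPowerSeries.coeff (R := ℂ) d
        (fst (∑ n ∈ Finset.Iic (d + Finsupp.single 0 1 + Finsupp.single 1 1),
          termD a b f n)) : R2)) +
  TrivSqZeroExt.inr (R := R2) (M := R2) ((fun d => MvPowerSeries.coeff (R := ℂ) d
        (snd (∑ n ∈ Finset.Iic (d + Finsupp.single 0 1 + Finsupp.single 1 1),
          termD a b f n)) : R2))



open Pointwise

lemma pd_apply (i : Fin 2) (f : R2) (d : Fin 2 →₀ ℕ) :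
    MvPowerSeries.coeff (R := ℂ) d (pd i f) = (d i + 1 : ℂ) * MvPowerSeries.coeff (R := ℂ) (d + Finsupp.single i 1) f := rfl

lemma pd_add (i : Fin 2) (p q : R2) : pd i (p + q) = pd i p + pd i q := by
  funext d
  show (_ : ℂ) * MvPowerSeries.coeff (R := ℂ) _ (p + q) = _
  rw [map_add]
  show _ = pd i p d + pd i q d
  simp [pd]; ring

lemma pd_zero (i : Fin 2) : pd i (0 : R2) = 0 := by
  funext d; simp [pd]; rfl

lemma coeff_mul_X' (d : Fin 2 →₀ ℕ) (p : R2) (j : Fin 2) :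
    MvPowerSeries.coeff (R := ℂ) d (p * MvPowerSeries.X j)
      = if Finsupp.single j 1 ≤ d then MvPowerSeries.coeff (R := ℂ) (d - Finsupp.single j 1) p else 0 := by
  rw [MvPowerSeries.X, MvPowerSeries.coeff_mul_monomial]
  split_ifs <;> simp

lemma pd_mul_X (i j : Fin 2) (p : R2) :
    pd i (p * MvPowerSeries.X j)
      = pd i p * MvPowerSeries.X j + if i = j then p else 0 := by
  apply MvPowerSeries.ext; intro d
  rw [pd_apply, map_add, coeff_mul_X', coeff_mul_X']
  rcases eq_or_ne i j with rfl | hij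
  · rw [if_pos rfl]
    have h1 : Finsupp.single i 1 ≤ d + Finsupp.single i 1 := le_add_self
    rw [if_pos h1, add_tsub_cancel_right]
    by_cases hd : Finsupp.single i 1 ≤ d
    · rw [if_pos hd, pd_apply, tsub_add_cancel_of_le hd]
      have hdi : 1 ≤ d i := by simpa using (Finsupp.single_le_iff.mp hd)
      rw [Finsupp.tsub_apply, Finsupp.single_eq_same]
      have : ((d i - 1 : ℕ) : ℂ) = (d i : ℂ) - 1 := by
        push_cast [Nat.cast_sub hdi]; ring
      rw [this]; ring
    · rw [if_neg hd]
      have hdi : d i = 0 := by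
        by_contra hne
        exact hd (Finsupp.single_le_iff.mpr (by omega))
      rw [hdi]; push_cast; simp
  · have hji : j ≠ i := fun hh => hij hh.symm
    have key : (Finsupp.single j 1 ≤ d + Finsupp.single i 1) ↔ Finsupp.single j 1 ≤ d := by
      rw [Finsupp.single_le_iff, Finsupp.single_le_iff, Finsupp.add_apply,
        Finsupp.single_eq_of_ne hji, add_zero]
    rw [if_neg hij]
    by_cases hd : Finsupp.single j 1 ≤ d
    · rw [if_pos (key.mpr hd), if_pos hd, pd_apply]
      have e1 : d + Finsupp.single i 1 - Finsupp.single j 1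
          = d - Finsupp.single j 1 + Finsupp.single i 1 := by
        rw [tsub_add_eq_add_tsub hd]
      rw [e1, Finsupp.tsub_apply, Finsupp.single_eq_of_ne hij, Nat.sub_zero]
      simp
    · rw [if_neg (fun hh => hd (key.mp hh)), if_neg hd]
      simp

lemma pd_one (i : Fin 2) : pd i (1 : R2) = 0 := by
  funext d
  have hne : d + Finsupp.single i 1 ≠ 0 := by
    intro hh
    have := DFunLike.congr_fun hh i
    simp [Finsupp.add_apply, Finsupp.single_eq_same] at this
  show (_ : ℂ) * MvPowerSeries.coeff (R := ℂ) _ (1 : R2) = _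
  rw [MvPowerSeries.coeff_one, if_neg hne, mul_zero]; rfl

lemma pd_X (i j : Fin 2) : pd i (MvPowerSeries.X j : R2) = if i = j then 1 else 0 := by
  have := pd_mul_X i j 1
  rw [one_mul, pd_one, zero_mul, zero_add] at this
  exact this

/-- The "substitution up to first order" map. -/
def Tm (u b : R2) (p : R2) : DualNumber R2 :=
  TrivSqZeroExt.inl p + eps * TrivSqZeroExt.inl (u * pd 0 p + b * pd 1 p)

lemma mul_expand (p q r s : R2) :
    ((inl p + eps * inl q) * (inl r + eps * inl s) : DualNumber R2)
      = inl (p * r) + eps * inl (p * s + r * q) := by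
  have h0 : (eps * inl q) * (eps * inl s) = (0 : DualNumber R2) := by
    rw [mul_mul_mul_comm, eps_mul_eps, zero_mul]
  rw [add_mul, mul_add, mul_add, h0, add_zero, inl_mul_inl,
    mul_left_comm (inl p) eps (inl s), inl_mul_inl,
    mul_comm (eps * inl q) (inl r), mul_left_comm (inl r) eps (inl q), inl_mul_inl,
    inl_add, mul_add, add_assoc]

lemma Tm_add (u b p q : R2) : Tm u b (p + q) = Tm u b p + Tm u b q := by
  simp only [Tm, pd_add, inl_add, mul_add]
  ring

lemma Tm_zero (u b : R2) : Tm u b 0 = 0 := by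
  simp [Tm, pd_zero]

lemma Tm_mul_X (u b p : R2) (j : Fin 2) :
    Tm u b (p * MvPowerSeries.X j) = Tm u b p * Tm u b (MvPowerSeries.X j) := by
  rw [Tm, Tm, Tm, mul_expand, pd_mul_X, pd_mul_X, pd_X, pd_X]
  congr 2
  fin_cases j <;> simp <;> ring

/-- Products of generators land in the right power. -/
lemma Tm_mem_aux (u b : R2) : ∀ (n : ℕ) (s : R2),
    s ∈ ({MvPowerSeries.X 0, MvPowerSeries.X 1} : Set R2) ^ n → ∀ r : R2,
    Tm u b (r * s) ∈
      (Ideal.span {Tm u b (MvPowerSeries.X 0), Tm u b (MvPowerSeries.X 1)}) ^ n := by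
  intro n
  induction n with
  | zero =>
    intro s hs r
    simp only [pow_zero, Set.mem_one] at hs
    subst hs
    rw [mul_one]
    have e : (Ideal.span {Tm u b (MvPowerSeries.X 0), Tm u b (MvPowerSeries.X 1)}) ^ 0 = 1 :=
      pow_zero _
    rw [e, Ideal.one_eq_top]
    exact Submodule.mem_top
  | succ n ih =>
    intro s hs r
    rw [pow_succ] at hs
    obtain ⟨t, ht, x, hx, rfl⟩ := Set.mem_mul.mp hs
    rw [← mul_assoc]
    have hxI : ∀ j : Fin 2, x = MvPowerSeries.X j →
        Tm u b x ∈ Ideal.span {Tm u b (MvPowerSeries.X 0), Tm u b (MvPowerSeries.X 1)} := by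
      rintro j rfl
      apply Ideal.subset_span
      fin_cases j
      · exact Set.mem_insert _ _
      · exact Set.mem_insert_of_mem _ rfl
    have hle : (Ideal.span {Tm u b (MvPowerSeries.X 0), Tm u b (MvPowerSeries.X 1)}) ^ n *
        Ideal.span {Tm u b (MvPowerSeries.X 0), Tm u b (MvPowerSeries.X 1)} ≤
        (Ideal.span {Tm u b (MvPowerSeries.X 0), Tm u b (MvPowerSeries.X 1)}) ^ (n + 1) :=
      le_of_eq (Submodule.pow_succ (M := Ideal.span {Tm u b (MvPowerSeries.X 0), Tm u b (MvPowerSeries.X 1)}) (n := n)).symm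
    rcases hx with rfl | hx
    · rw [Tm_mul_X]
      exact hle (Ideal.mul_mem_mul (ih t ht r) (hxI 0 rfl))
    · rw [Set.mem_singleton_iff] at hx
      subst hx
      rw [Tm_mul_X]
      exact hle (Ideal.mul_mem_mul (ih t ht r) (hxI 1 rfl))

lemma Tm_mem (u b : R2) {n : ℕ} {p : R2} (hp : p ∈ Mxy ^ n) :
    Tm u b p ∈
      (Ideal.span {Tm u b (MvPowerSeries.X 0), Tm u b (MvPowerSeries.X 1)}) ^ n := by
  rw [Mxy] at hp
  rw [show (Ideal.span {MvPowerSeries.X 0, MvPowerSeries.X 1} : Ideal R2) ^ n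
      = Ideal.span (({MvPowerSeries.X 0, MvPowerSeries.X 1} : Set R2) ^ n) from
    Submodule.span_pow _ n] at hp
  have H : ∀ q, q ∈ Ideal.span (({MvPowerSeries.X 0, MvPowerSeries.X 1} : Set R2) ^ n) →
      ∀ r : R2, Tm u b (r * q) ∈
        (Ideal.span {Tm u b (MvPowerSeries.X 0), Tm u b (MvPowerSeries.X 1)}) ^ n := by
    intro q hq
    refine Submodule.span_induction (fun x hx => Tm_mem_aux u b n x hx) ?_ ?_ ?_ hq
    · intro r; rw [mul_zero, Tm_zero]; exact Submodule.zero_mem _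
    · intro x y hx hy hx' hy' r
      rw [mul_add, Tm_add]
      exact Submodule.add_mem _ (hx' r) (hy' r)
    · intro a x hx hx' r
      rw [smul_eq_mul, ← mul_assoc]
      exact hx' (r * a)
  have := H p hp 1
  rwa [one_mul] at this

lemma mem_set_pow_mem (n : ℕ) (s : R2)
    (hs : s ∈ ({MvPowerSeries.X 0, MvPowerSeries.X 1} : Set R2) ^ n) : s ∈ Mxy ^ n := by
  rw [Mxy]
  rw [show (Ideal.span {MvPowerSeries.X 0, MvPowerSeries.X 1} : Ideal R2) ^ n
      = Ideal.span (({MvPowerSeries.X 0, MvPowerSeries.X 1} : Set R2) ^ n) from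
    Submodule.span_pow _ n]
  exact Ideal.subset_span hs

/-- The partial derivative drops the power by one. -/
lemma pd_mem_aux (i : Fin 2) : ∀ (n : ℕ) (s : R2),
    s ∈ ({MvPowerSeries.X 0, MvPowerSeries.X 1} : Set R2) ^ (n + 1) → ∀ r : R2,
    pd i (r * s) ∈ Mxy ^ n := by
  intro n
  induction n with
  | zero =>
    intro s hs r
    have e : Mxy ^ 0 = 1 := pow_zero _
    rw [e, Ideal.one_eq_top]
    exact Submodule.mem_top
  | succ n ih =>
    intro s hs r
    rw [pow_succ] at hs
    obtain ⟨t, ht, x, hx, rfl⟩ := Set.mem_mul.mp hs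
    have hxj : ∃ j : Fin 2, x = MvPowerSeries.X j := by
      rcases hx with rfl | hx
      · exact ⟨0, rfl⟩
      · exact ⟨1, Set.mem_singleton_iff.mp hx⟩
    obtain ⟨j, rfl⟩ := hxj
    rw [← mul_assoc, pd_mul_X]
    apply Submodule.add_mem
    · refine (le_of_eq (Submodule.pow_succ (M := Mxy) (n := n)).symm) ?_
      apply Ideal.mul_mem_mul (ih t ht r)
      rw [Mxy]
      apply Ideal.subset_span
      fin_cases j
      · exact Set.mem_insert _ _
      · exact Set.mem_insert_of_mem _ rfl
    · have hrt : r * t ∈ Mxy ^ (n + 1) :=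
        Ideal.mul_mem_left _ r (mem_set_pow_mem (n+1) t ht)
      split_ifs
      · exact hrt
      · exact Submodule.zero_mem _

lemma pd_mem (i : Fin 2) {n : ℕ} {p : R2} (hp : p ∈ Mxy ^ (n + 1)) : pd i p ∈ Mxy ^ n := by
  rw [Mxy] at hp
  rw [show (Ideal.span {MvPowerSeries.X 0, MvPowerSeries.X 1} : Ideal R2) ^ (n + 1)
      = Ideal.span (({MvPowerSeries.X 0, MvPowerSeries.X 1} : Set R2) ^ (n + 1)) from
    Submodule.span_pow _ (n + 1)] at hp
  have H : ∀ q, q ∈ Ideal.span (({MvPowerSeries.X 0, MvPowerSeries.X 1} : Set R2) ^ (n+1)) →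
      ∀ r : R2, pd i (r * q) ∈ Mxy ^ n := by
    intro q hq
    refine Submodule.span_induction (fun x hx => pd_mem_aux i n x hx) ?_ ?_ ?_ hq
    · intro r; rw [mul_zero, pd_zero]; exact Submodule.zero_mem _
    · intro x y hx hy hx' hy' r
      rw [mul_add, pd_add]
      exact Submodule.add_mem _ (hx' r) (hy' r)
    · intro a x hx hx' r
      rw [smul_eq_mul, ← mul_assoc]
      exact hx' (r * a)
  have := H p hp 1
  rwa [one_mul] at this

lemma pd0_X1_pow (m : ℕ) : pd 0 ((MvPowerSeries.X 1 : R2) ^ m) = 0 := by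
  induction m with
  | zero => simpa using pd_one 0
  | succ k ih => rw [pow_succ, pd_mul_X, ih, zero_mul, zero_add, if_neg (by decide)]

lemma eps_Tm (u b w : R2) : eps * Tm u b w = eps * TrivSqZeroExt.inl w := by
  rw [Tm, mul_add, ← mul_assoc, eps_mul_eps, zero_mul, add_zero]

/-- In the unitangential case `f = y^m + h.o.t.`, the deformation `f + ε g` with
`g = a f_x + b f_y + h'` is equimultiple along the shifted sections
`(x,y) ↦ (x + ε(c + a), y + ε b)` for every constant `c ∈ ℂ`. -/
theorem section_not_unique_unitangential (m : ℕ) (hm : 1 ≤ m) (h h' a b f g : R2)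
    (hh : h ∈ Mxy ^ (m + 1)) (hh' : h' ∈ Mxy ^ m)
    (hf : f = MvPowerSeries.X 1 ^ m + h)
    (hg : g = a * pd 0 f + b * pd 1 f + h') :
    ∀ c : ℂ,
      (TrivSqZeroExt.inl f + eps * TrivSqZeroExt.inl g : DualNumber R2)
        ∈ Ideal.span {Xa (MvPowerSeries.C (σ := Fin 2) (R := ℂ) c + a), Yb b} ^ m := by
  intro c
  set u : R2 := MvPowerSeries.C (σ := Fin 2) (R := ℂ) c + a with hu
  have hT0 : Tm u b (MvPowerSeries.X 0) = Xa u := by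
    rw [Tm, Xa, pd_X, pd_X, if_pos rfl, if_neg (by decide : ¬(1 : Fin 2) = 0),
      mul_one, mul_zero, add_zero]
  have hT1 : Tm u b (MvPowerSeries.X 1) = Yb b := by
    rw [Tm, Yb, pd_X, pd_X, if_neg (by decide : ¬(0 : Fin 2) = 1), if_pos rfl,
      mul_zero, mul_one, zero_add]
  have hfm : f ∈ Mxy ^ m := by
    rw [hf]
    refine Submodule.add_mem _ ?_ ?_
    · exact Ideal.pow_mem_pow
        (by rw [Mxy]; exact Ideal.subset_span (Set.mem_insert_of_mem _ rfl)) m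
    · exact Ideal.pow_le_pow_right (Nat.le_succ m) hh
  have hpdf : pd 0 f ∈ Mxy ^ m := by
    rw [hf, pd_add, pd0_X1_pow, zero_add]
    exact pd_mem 0 hh
  have hw : h' - MvPowerSeries.C (σ := Fin 2) (R := ℂ) c * pd 0 f ∈ Mxy ^ m :=
    Submodule.sub_mem _ hh' (Ideal.mul_mem_left _ _ hpdf)
  have hgw : g = (u * pd 0 f + b * pd 1 f)
      + (h' - MvPowerSeries.C (σ := Fin 2) (R := ℂ) c * pd 0 f) := by
    rw [hg, hu]; ring
  have key : (TrivSqZeroExt.inl f + eps * TrivSqZeroExt.inl g : DualNumber R2)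
      = Tm u b f + eps * TrivSqZeroExt.inl (h' - MvPowerSeries.C (σ := Fin 2) (R := ℂ) c * pd 0 f) := by
    rw [hgw, inl_add, mul_add, Tm, add_assoc]
  rw [key, show Ideal.span {Xa u, Yb b}
      = Ideal.span {Tm u b (MvPowerSeries.X 0), Tm u b (MvPowerSeries.X 1)} by rw [hT0, hT1]]
  refine Submodule.add_mem _ (Tm_mem u b hfm) ?_
  have h2 : eps * Tm u b (h' - MvPowerSeries.C (σ := Fin 2) (R := ℂ) c * pd 0 f) ∈
      (Ideal.span {Tm u b (MvPowerSeries.X 0), Tm u b (MvPowerSeries.X 1)}) ^ m :=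
    Ideal.mul_mem_left _ eps (Tm_mem u b hw)
  rwa [eps_Tm] at h2

end
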